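/- arXiv:1701.07962 — 3 statements merged into one kernel-verified Lean document; each statement's English description precedes it below -/
import Mathlib

section
/- For any μ ∈ cabv(X,0) (vector measures of bounded variation with μ(T)=0 on a compact metric space T with values in a Hilbert space X), the Monge–Kantorovich norms satisfy ‖μ‖_MK ≤ ‖μ‖*_MK ≤ ‖μ‖_MK · (diam(T) + 1), and also ‖μ‖*_MK ≤ ‖μ‖ · diam(T). -/
open MeasureTheory Filter Topology Set

noncomputable section

/-- A finite Borel partition of the whole space. -/
def IsBorelPartition {T : Type*} [MeasurableSpace T] (P : Finset (Set T)) : Prop :=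
  (∀ A ∈ P, MeasurableSet A) ∧ ((P : Set (Set T)).PairwiseDisjoint id) ∧
    ⋃₀ (P : Set (Set T)) = Set.univ

/-- Total variation of a vector measure, as an extended real. -/
def evar {T X : Type*} [MeasurableSpace T] [NormedAddCommGroup X]
    (μ : VectorMeasure T X) : ENNReal :=
  ⨆ (P : Finset (Set T)) (_ : IsBorelPartition P), ∑ A ∈ P, (‖μ A‖₊ : ENNReal)

/-- Bounded variation. -/
def BddVar {T X : Type*} [MeasurableSpace T] [NormedAddCommGroup X]
    (μ : VectorMeasure T X) : Prop := evar μ ≠ ⊤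

/-- The variational norm. -/
def varNorm {T X : Type*} [MeasurableSpace T] [NormedAddCommGroup X]
    (μ : VectorMeasure T X) : ℝ := (evar μ).toReal

/-- Composition of a bounded operator with a vector measure. -/
def opComp {T X Y 𝕜 : Type*} [MeasurableSpace T] [NontriviallyNormedField 𝕜]
    [NormedAddCommGroup X] [NormedSpace 𝕜 X] [NormedAddCommGroup Y] [NormedSpace 𝕜 Y]
    (R : X →L[𝕜] Y) (μ : VectorMeasure T X) : VectorMeasure T Y :=
  μ.mapRange R.toLinearMap.toAddMonoidHom R.continuous

/-- The Markov-type operator generated by operators `R i` and maps `ω i`. -/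
def markovH {T X 𝕜 : Type*} [MeasurableSpace T] [NontriviallyNormedField 𝕜]
    [NormedAddCommGroup X] [NormedSpace 𝕜 X] {M : ℕ}
    (R : Fin M → X →L[𝕜] X) (ω : Fin M → T → T) (μ : VectorMeasure T X) :
    VectorMeasure T X :=
  ∑ i, opComp (R i) (μ.map (ω i))

/-- Simple (finitely-valued, measurable) function. -/
def IsSimpleFn {T X : Type*} [MeasurableSpace T] (g : T → X) : Prop :=
  (Set.range g).Finite ∧ ∀ x : X, MeasurableSet (g ⁻¹' {x})

/-- Integral of a simple function against a vector measure. -/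
def simpleIntegral (𝕜 : Type*) {T X : Type*} [RCLike 𝕜] [MeasurableSpace T]
    [NormedAddCommGroup X] [InnerProductSpace 𝕜 X] (μ : VectorMeasure T X) (g : T → X) : 𝕜 :=
  ∑ᶠ x : X, (inner 𝕜 x (μ (g ⁻¹' {x})) : 𝕜)

/-- `I` is the (uniform, sesquilinear) integral of `f` with respect to `μ`. -/
def HasUIntegral (𝕜 : Type*) {T X : Type*} [RCLike 𝕜] [MeasurableSpace T]
    [NormedAddCommGroup X] [InnerProductSpace 𝕜 X] (μ : VectorMeasure T X)
    (f : T → X) (I : 𝕜) : Prop :=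
  ∀ g : ℕ → T → X, (∀ n, IsSimpleFn (g n)) → TendstoUniformly g f atTop →
    Tendsto (fun n => simpleIntegral 𝕜 μ (g n)) atTop (nhds I)

/-- The uniform integral (defaulting to `0` when it does not exist). -/
def uIntegral (𝕜 : Type*) {T X : Type*} [RCLike 𝕜] [MeasurableSpace T]
    [NormedAddCommGroup X] [InnerProductSpace 𝕜 X] (μ : VectorMeasure T X) (f : T → X) : 𝕜 :=
  letI := Classical.propDecidable
  if h : ∃ I, HasUIntegral 𝕜 μ f I then h.choose else 0

/-- The Monge–Kantorovich norm. -/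
def mkNorm (𝕜 : Type*) {T X : Type*} [RCLike 𝕜] [PseudoMetricSpace T] [MeasurableSpace T]
    [NormedAddCommGroup X] [InnerProductSpace 𝕜 X] (μ : VectorMeasure T X) : ℝ :=
  sSup {s | ∃ (f : T → X) (L : NNReal), LipschitzWith L f ∧ (∀ t, ‖f t‖ + (L : ℝ) ≤ 1) ∧
    s = ‖uIntegral 𝕜 μ f‖}

/-- The modified Monge–Kantorovich norm. -/
def mkNormStar (𝕜 : Type*) {T X : Type*} [RCLike 𝕜] [PseudoMetricSpace T] [MeasurableSpace T]
    [NormedAddCommGroup X] [InnerProductSpace 𝕜 X] (μ : VectorMeasure T X) : ℝ :=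
  sSup {s | ∃ f : T → X, LipschitzWith 1 f ∧ s = ‖uIntegral 𝕜 μ f‖}

/-- The `X`-valued Dirac measure `B ↦ δ_t(B) • x`. -/
def diracVM {T : Type*} [MeasurableSpace T] {𝕜 X : Type*} [RCLike 𝕜]
    [NormedAddCommGroup X] [NormedSpace 𝕜 X] (t : T) (x : X) : VectorMeasure T X :=
  ((Measure.dirac t).toSignedMeasure).mapRange
    { toFun := fun c : ℝ => (c : 𝕜) • x
      map_zero' := by simp
      map_add' := fun a b => by push_cast; rw [add_smul] }
    (RCLike.continuous_ofReal.smul continuous_const)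

end

noncomputable section Aux

open scoped Classical

variable {T : Type*} [MeasurableSpace T] {X : Type*} [NormedAddCommGroup X]

lemma IsSimpleFn.measurableSet_preimage {g : T → X} (hg : IsSimpleFn g) (S : Set X) :
    MeasurableSet (g ⁻¹' S) := by
  have h1 : g ⁻¹' S = ⋃ y ∈ S ∩ Set.range g, g ⁻¹' {y} := by
    ext t
    simp only [Set.mem_preimage, Set.mem_iUnion, Set.mem_inter_iff, Set.mem_range,
      Set.mem_singleton_iff]
    constructor
    · intro h; exact ⟨g t, ⟨h, ⟨t, rfl⟩⟩, rfl⟩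
    · rintro ⟨y, ⟨hy, _⟩, h⟩; rw [h]; exact hy
  rw [h1]
  exact MeasurableSet.biUnion ((hg.1.subset Set.inter_subset_right).countable)
    (fun y _ => hg.2 y)

lemma IsSimpleFn.comp' {g : T → X} (hg : IsSimpleFn g) (φ : X → X) :
    IsSimpleFn (φ ∘ g) := by
  refine ⟨?_, fun x => ?_⟩
  · rw [Set.range_comp]; exact hg.1.image φ
  · rw [Set.preimage_comp]; exact hg.measurableSet_preimage _

lemma isSimpleFn_const (c : X) : IsSimpleFn (fun _ : T => c) := by
  refine ⟨(Set.finite_singleton c).subset ?_, fun x => ?_⟩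
  · rintro _ ⟨t, rfl⟩; exact Set.mem_singleton c
  · by_cases h : c = x
    · have : (fun _ : T => c) ⁻¹' {x} = Set.univ := by ext t; simp [h]
      rw [this]; exact MeasurableSet.univ
    · have : (fun _ : T => c) ⁻¹' {x} = ∅ := by ext t; simp [h]
      rw [this]; exact MeasurableSet.empty

lemma IsSimpleFn.piecewise {g : T → X} (hg : IsSimpleFn g) {B : Set T}
    (hB : MeasurableSet B) (c : X) :
    IsSimpleFn (fun t => if t ∈ B then c else g t) := by
  classical
  refine ⟨((hg.1.insert c).subset ?_), fun x => ?_⟩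
  · rintro _ ⟨t, rfl⟩
    by_cases h : t ∈ B
    · simp [h]
    · simp only [h, if_false]
      exact Set.mem_insert_iff.2 (Or.inr ⟨t, rfl⟩)
  · have : (fun t => if t ∈ B then c else g t) ⁻¹' {x}
        = (B ∩ (if c = x then Set.univ else ∅)) ∪ (Bᶜ ∩ g ⁻¹' {x}) := by
      ext t
      by_cases h : t ∈ B <;> by_cases hc : c = x <;>
        simp [h, hc]
    rw [this]
    refine (hB.inter ?_).union (hB.compl.inter (hg.2 x))
    split <;> [exact MeasurableSet.univ; exact MeasurableSet.empty]

/-- Finite additivity of a vector measure over a finite disjoint family. -/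
lemma vm_biUnion_finset (μ : VectorMeasure T X) {ι : Type*} (s : Finset ι)
    (A : ι → Set T) (hmeas : ∀ i ∈ s, MeasurableSet (A i))
    (hdisj : (s : Set ι).PairwiseDisjoint A) :
    μ (⋃ i ∈ s, A i) = ∑ i ∈ s, μ (A i) := by
  classical
  induction s using Finset.induction with
  | empty => simp
  | @insert a s ha ih =>
    have hBmeas : MeasurableSet (⋃ x ∈ s, A x) := by
      have := MeasurableSet.biUnion s.countable_toSet
        (fun i (hi : i ∈ (↑s : Set ι)) => hmeas i (Finset.mem_insert_of_mem hi))
      simpa using this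
    have hd : Disjoint (A a) (⋃ x ∈ s, A x) := by
      rw [Set.disjoint_iUnion₂_right]
      intro i hi
      exact hdisj (Finset.mem_insert_self a s) (Finset.mem_insert_of_mem hi)
        (fun h => ha (h ▸ hi))
    rw [Finset.set_biUnion_insert, Finset.sum_insert ha,
      VectorMeasure.of_union hd (hmeas a (Finset.mem_insert_self a s)) hBmeas,
      ih (fun i hi => hmeas i (Finset.mem_insert_of_mem hi))
        (hdisj.subset (by intro i hi; exact Finset.mem_insert_of_mem hi))]

variable {𝕜 : Type*} [RCLike 𝕜] [InnerProductSpace 𝕜 X]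

lemma simpleIntegral_eq_sum (μ : VectorMeasure T X) {g : T → X} (s : Finset X)
    (hs : Set.range g ⊆ ↑s) :
    simpleIntegral 𝕜 μ g = ∑ x ∈ s, (inner 𝕜 x (μ (g ⁻¹' {x})) : 𝕜) := by
  refine finsum_eq_finset_sum_of_support_subset _ ?_
  intro x hx
  simp only [Function.mem_support] at hx
  by_contra hxs
  apply hx
  have hempty : g ⁻¹' {x} = ∅ := by
    ext t
    simp only [Set.mem_preimage, Set.mem_singleton_iff, Set.mem_empty_iff_false,
      iff_false]
    intro h
    exact hxs (hs ⟨t, h⟩)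
  rw [hempty, μ.empty, inner_zero_right]

lemma preimage_pairwise_disjoint (g : T → X) :
    ∀ x y : X, x ≠ y → Disjoint (g ⁻¹' {x}) (g ⁻¹' {y}) := by
  intro x y hxy
  rw [Set.disjoint_left]
  intro t h1 h2
  exact hxy ((Set.mem_singleton_iff.1 h1).symm.trans (Set.mem_singleton_iff.1 h2))

lemma sum_measure_preimage (μ : VectorMeasure T X) {g : T → X} (hg : IsSimpleFn g)
    (s : Finset X) (hs : Set.range g ⊆ ↑s) :
    ∑ x ∈ s, μ (g ⁻¹' {x}) = μ Set.univ := by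
  rw [← vm_biUnion_finset μ s _ (fun x _ => hg.2 x)
    (fun x _ y _ hxy => preimage_pairwise_disjoint g x y hxy)]
  congr 1
  ext t
  simp only [Set.mem_iUnion, Set.mem_preimage, Set.mem_singleton_iff, Set.mem_univ,
    iff_true]
  exact ⟨g t, hs ⟨t, rfl⟩, rfl⟩

lemma sum_norm_measure_preimage_le (μ : VectorMeasure T X) {g : T → X}
    (hg : IsSimpleFn g) (hμ : BddVar μ) :
    ∑ x ∈ hg.1.toFinset, ‖μ (g ⁻¹' {x})‖ ≤ varNorm μ := by
  classical
  set s := hg.1.toFinset with hsdef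
  have hmem : ∀ x ∈ s, x ∈ Set.range g := by
    intro x hx; rwa [hsdef, Set.Finite.mem_toFinset] at hx
  have hinj : ∀ x ∈ s, ∀ y ∈ s, g ⁻¹' {x} = g ⁻¹' {y} → x = y := by
    intro x hx y hy hxy
    obtain ⟨t, ht⟩ := hmem x hx
    by_contra hne
    have h1 : t ∈ g ⁻¹' {x} := by simp [ht]
    have h2 : t ∈ g ⁻¹' {y} := hxy ▸ h1
    exact (preimage_pairwise_disjoint g x y hne).ne_of_mem h1 h2 rfl
  set P : Finset (Set T) := s.image (fun x => g ⁻¹' {x}) with hPdef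
  have hP : IsBorelPartition P := by
    refine ⟨?_, ?_, ?_⟩
    · intro A hA
      obtain ⟨x, _, rfl⟩ := Finset.mem_image.1 hA
      exact hg.2 x
    · intro A hA B hB hAB
      obtain ⟨x, hx, rfl⟩ := Finset.mem_image.1 (Finset.mem_coe.1 hA)
      obtain ⟨y, hy, rfl⟩ := Finset.mem_image.1 (Finset.mem_coe.1 hB)
      exact preimage_pairwise_disjoint g x y (fun h => hAB (by rw [h]))
    · ext t
      simp only [Set.mem_sUnion, Finset.mem_coe, Set.mem_univ, iff_true, hPdef]
      exact ⟨g ⁻¹' {g t}, Finset.mem_image_of_mem _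
        (by rw [hsdef, Set.Finite.mem_toFinset]; exact ⟨t, rfl⟩), rfl⟩
  have key : (∑ A ∈ P, (‖μ A‖₊ : ENNReal)) ≤ evar μ := by
    rw [evar]
    exact le_iSup₂ (f := fun (P : Finset (Set T)) (_ : IsBorelPartition P) =>
      ∑ A ∈ P, (‖μ A‖₊ : ENNReal)) P hP
  have h1 : ∑ x ∈ s, ‖μ (g ⁻¹' {x})‖ = ∑ A ∈ P, ‖μ A‖ := by
    rw [hPdef, Finset.sum_image hinj]
  have h2 : ∑ A ∈ P, ‖μ A‖ = (∑ A ∈ P, (‖μ A‖₊ : ENNReal)).toReal := by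
    rw [ENNReal.toReal_sum (fun A _ => ENNReal.coe_ne_top)]
    simp [ENNReal.coe_toReal]
  rw [h1, h2, varNorm]
  exact ENNReal.toReal_mono hμ key

lemma norm_simpleIntegral_le (μ : VectorMeasure T X) {g : T → X}
    (hg : IsSimpleFn g) (hμ : BddVar μ) {M : ℝ} (hM : 0 ≤ M)
    (hb : ∀ t, ‖g t‖ ≤ M) :
    ‖simpleIntegral 𝕜 μ g‖ ≤ M * varNorm μ := by
  rw [simpleIntegral_eq_sum μ hg.1.toFinset (by simp)]
  calc ‖∑ x ∈ hg.1.toFinset, (inner 𝕜 x (μ (g ⁻¹' {x})) : 𝕜)‖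
      ≤ ∑ x ∈ hg.1.toFinset, ‖(inner 𝕜 x (μ (g ⁻¹' {x})) : 𝕜)‖ := norm_sum_le _ _
    _ ≤ ∑ x ∈ hg.1.toFinset, M * ‖μ (g ⁻¹' {x})‖ := by
        refine Finset.sum_le_sum (fun x hx => ?_)
        obtain ⟨t, ht⟩ := (Set.Finite.mem_toFinset _).1 hx
        refine (norm_inner_le_norm x _).trans ?_
        exact mul_le_mul_of_nonneg_right (ht ▸ hb t) (norm_nonneg _)
    _ = M * ∑ x ∈ hg.1.toFinset, ‖μ (g ⁻¹' {x})‖ := (Finset.mul_sum _ _ _).symm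
    _ ≤ M * varNorm μ :=
        mul_le_mul_of_nonneg_left (sum_norm_measure_preimage_le μ hg hμ) hM

lemma simpleIntegral_add_const (μ : VectorMeasure T X) {g : T → X}
    (hg : IsSimpleFn g) (c : X) :
    simpleIntegral 𝕜 μ (fun t => g t + c)
      = simpleIntegral 𝕜 μ g + (inner 𝕜 c (μ Set.univ) : 𝕜) := by
  classical
  set s := hg.1.toFinset with hsdef
  have hrange : Set.range g ⊆ ↑s := by
    intro x hx; rw [hsdef, Finset.mem_coe, Set.Finite.mem_toFinset]; exact hx
  have h1 : simpleIntegral 𝕜 μ (fun t => g t + c)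
      = ∑ x ∈ s.image (· + c), (inner 𝕜 x (μ ((fun t => g t + c) ⁻¹' {x})) : 𝕜) := by
    refine simpleIntegral_eq_sum μ _ ?_
    rintro _ ⟨t, rfl⟩
    exact Finset.mem_coe.2 (Finset.mem_image_of_mem _ (Finset.mem_coe.1 (hrange ⟨t, rfl⟩)))
  rw [h1, Finset.sum_image (fun x _ y _ h => by exact add_right_cancel h)]
  have hpre : ∀ x : X, ((fun t => g t + c) ⁻¹' {x + c}) = g ⁻¹' {x} := by
    intro x; ext t; simp
  simp_rw [hpre, inner_add_left]
  rw [Finset.sum_add_distrib, ← inner_sum, sum_measure_preimage μ hg s hrange,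
    simpleIntegral_eq_sum μ s hrange]

lemma simpleIntegral_real_smul (μ : VectorMeasure T X) {g : T → X}
    (hg : IsSimpleFn g) {r : ℝ} (hr : r ≠ 0) :
    simpleIntegral 𝕜 μ (fun t => (r : 𝕜) • g t) = (r : 𝕜) * simpleIntegral 𝕜 μ g := by
  classical
  have hr' : (r : 𝕜) ≠ 0 := RCLike.ofReal_ne_zero.2 hr
  set s := hg.1.toFinset with hsdef
  have hrange : Set.range g ⊆ ↑s := by
    intro x hx; rw [hsdef, Finset.mem_coe, Set.Finite.mem_toFinset]; exact hx
  have hinj : Function.Injective (fun x : X => (r : 𝕜) • x) :=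
    smul_right_injective X hr'
  have h1 : simpleIntegral 𝕜 μ (fun t => (r : 𝕜) • g t)
      = ∑ x ∈ s.image (fun x => (r : 𝕜) • x),
          (inner 𝕜 x (μ ((fun t => (r : 𝕜) • g t) ⁻¹' {x})) : 𝕜) := by
    refine simpleIntegral_eq_sum μ _ ?_
    rintro _ ⟨t, rfl⟩
    exact Finset.mem_coe.2 (Finset.mem_image_of_mem _ (Finset.mem_coe.1 (hrange ⟨t, rfl⟩)))
  rw [h1, Finset.sum_image (fun x _ y _ h => hinj h)]
  have hpre : ∀ x : X, ((fun t => (r : 𝕜) • g t) ⁻¹' {(r : 𝕜) • x}) = g ⁻¹' {x} := by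
    intro x; ext t
    simp only [Set.mem_preimage, Set.mem_singleton_iff]
    exact ⟨fun h => hinj h, fun h => by rw [h]⟩
  simp_rw [hpre, inner_smul_left, RCLike.conj_ofReal]
  rw [← Finset.mul_sum, simpleIntegral_eq_sum μ s hrange]

section Approx

open scoped Classical

variable {T : Type*} [MetricSpace T] [MeasurableSpace T] [BorelSpace T]
  {X : Type*} [NormedAddCommGroup X]

lemma exists_simple_approx_finset (f : T → X) (x₀ : X) (δ : ℝ) (s : Finset T) :
    ∃ g : T → X, IsSimpleFn g ∧
      ∀ t ∈ ⋃ u ∈ s, Metric.ball u δ, ∃ u, dist t u < δ ∧ g t = f u := by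
  classical
  induction s using Finset.induction with
  | empty => exact ⟨fun _ => x₀, isSimpleFn_const x₀, by simp⟩
  | @insert a s ha ih =>
    obtain ⟨g, hg, hgs⟩ := ih
    refine ⟨fun t => if t ∈ Metric.ball a δ then f a else g t,
      hg.piecewise Metric.isOpen_ball.measurableSet _, ?_⟩
    intro t ht
    by_cases h : t ∈ Metric.ball a δ
    · exact ⟨a, by simpa [Metric.mem_ball] using h, by simp [h]⟩
    · have ht' : t ∈ ⋃ u ∈ s, Metric.ball u δ := by
        rw [Finset.set_biUnion_insert] at ht
        rcases ht with h1 | h2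
        · exact absurd h1 h
        · exact h2
      obtain ⟨u, hd, hgu⟩ := hgs t ht'
      exact ⟨u, hd, by simp [h, hgu]⟩

variable [CompactSpace T] [Nonempty T]

lemma exists_simple_approx {f : T → X} (hf : Continuous f) {ε : ℝ} (hε : 0 < ε) :
    ∃ g : T → X, IsSimpleFn g ∧ ∀ t, ‖g t - f t‖ < ε := by
  have huc := CompactSpace.uniformContinuous_of_continuous hf
  obtain ⟨δ, hδ, hδf⟩ := Metric.uniformContinuous_iff.1 huc ε hε
  obtain ⟨s, hs⟩ := isCompact_univ.elim_finite_subcover (fun u : T => Metric.ball u δ)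
    (fun u => Metric.isOpen_ball)
    (fun t _ => Set.mem_iUnion.2 ⟨t, Metric.mem_ball_self hδ⟩)
  obtain ⟨g, hg, hgs⟩ := exists_simple_approx_finset f (f (Classical.arbitrary T)) δ s
  refine ⟨g, hg, fun t => ?_⟩
  obtain ⟨u, hd, hgu⟩ := hgs t (hs (Set.mem_univ t))
  rw [hgu, ← dist_eq_norm]
  rw [dist_comm] at hd
  exact hδf hd

lemma exists_simple_seq {f : T → X} (hf : Continuous f) :
    ∃ g : ℕ → T → X, (∀ n, IsSimpleFn (g n)) ∧
      (∀ n t, ‖g n t - f t‖ ≤ 1 / (n + 1)) ∧ TendstoUniformly g f atTop := by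
  have : ∀ n : ℕ, ∃ g : T → X, IsSimpleFn g ∧ ∀ t, ‖g t - f t‖ < 1 / (n + 1) :=
    fun n => exists_simple_approx hf (by positivity)
  choose g hg hgb using this
  refine ⟨g, hg, fun n t => (hgb n t).le, ?_⟩
  rw [Metric.tendstoUniformly_iff]
  intro ε hε
  obtain ⟨N, hN⟩ := exists_nat_one_div_lt hε
  filter_upwards [eventually_ge_atTop N] with n hn
  intro x
  rw [dist_comm, dist_eq_norm]
  refine lt_of_lt_of_le (hgb n x) (le_trans ?_ hN.le)
  apply one_div_le_one_div_of_le (by positivity)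
  have : (N : ℝ) ≤ n := Nat.cast_le.2 hn
  linarith

end Approx

section Main

variable {T : Type*} [MetricSpace T] [CompactSpace T] [MeasurableSpace T] [BorelSpace T]
  {𝕜 X : Type*} [RCLike 𝕜] [NormedAddCommGroup X] [InnerProductSpace 𝕜 X]

lemma hasUIntegral_unique [Nonempty T] (μ : VectorMeasure T X) {f : T → X}
    (hf : Continuous f) {I I' : 𝕜} (h : HasUIntegral 𝕜 μ f I)
    (h' : HasUIntegral 𝕜 μ f I') : I = I' := by
  obtain ⟨g, hg, _, hgu⟩ := exists_simple_seq hf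
  exact tendsto_nhds_unique (h g hg hgu) (h' g hg hgu)

lemma norm_uIntegral_le_star [Nonempty T] (μ : VectorMeasure T X) (hμ : BddVar μ)
    (h0 : μ Set.univ = 0) {f : T → X} (hf : LipschitzWith 1 f) :
    ‖uIntegral 𝕜 μ f‖ ≤ varNorm μ * Metric.diam (Set.univ : Set T) := by
  have hD : 0 ≤ Metric.diam (Set.univ : Set T) := Metric.diam_nonneg
  have hvar : 0 ≤ varNorm μ := ENNReal.toReal_nonneg
  rw [uIntegral]
  split_ifs with h
  · -- the integral exists
    set I := h.choose with hIdef
    have hI : HasUIntegral 𝕜 μ f I := h.choose_spec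
    set t₀ : T := Classical.arbitrary T
    obtain ⟨g, hg, hgb, hgu⟩ := exists_simple_seq hf.continuous
    have hten : Tendsto (fun n => simpleIntegral 𝕜 μ (g n)) atTop (nhds I) :=
      hI g hg hgu
    have hbound : ∀ n, ‖simpleIntegral 𝕜 μ (g n)‖
        ≤ (1 / (n + 1) + Metric.diam (Set.univ : Set T)) * varNorm μ := by
      intro n
      have hsimp' : IsSimpleFn (fun t => g n t - f t₀) := (hg n).comp' (· - f t₀)
      have heq : simpleIntegral 𝕜 μ (g n)
          = simpleIntegral 𝕜 μ (fun t => g n t - f t₀) := by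
        have := simpleIntegral_add_const (𝕜 := 𝕜) μ hsimp' (f t₀)
        simp only [sub_add_cancel, h0, inner_zero_right, add_zero] at this
        exact this
      rw [heq]
      refine norm_simpleIntegral_le μ hsimp' hμ (by positivity) (fun t => ?_)
      have h1 : ‖g n t - f t₀‖ ≤ ‖g n t - f t‖ + ‖f t - f t₀‖ := by
        have := norm_add_le (g n t - f t) (f t - f t₀)
        simpa using this
      refine h1.trans (add_le_add (hgb n t) ?_)
      have h2 : dist (f t) (f t₀) ≤ 1 * dist t t₀ := hf.dist_le_mul t t₀
      rw [← dist_eq_norm]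
      refine h2.trans ?_
      rw [one_mul]
      exact Metric.dist_le_diam_of_mem isCompact_univ.isBounded
        (Set.mem_univ t) (Set.mem_univ t₀)
    have hlim : Tendsto
        (fun n : ℕ => (1 / (n + 1 : ℝ) + Metric.diam (Set.univ : Set T)) * varNorm μ)
        atTop (nhds ((0 + Metric.diam (Set.univ : Set T)) * varNorm μ)) := by
      exact ((tendsto_one_div_add_atTop_nhds_zero_nat.add tendsto_const_nhds).mul
        tendsto_const_nhds)
    have := le_of_tendsto_of_tendsto' hten.norm hlim hbound
    calc ‖I‖ ≤ (0 + Metric.diam (Set.univ : Set T)) * varNorm μ := this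
      _ = varNorm μ * Metric.diam (Set.univ : Set T) := by ring
  · simpa using mul_nonneg hvar hD

end Main

end Aux


/-- for `μ ∈ cabv(X,0)`,
`‖μ‖_MK ≤ ‖μ‖*_MK ≤ ‖μ‖_MK (diam T + 1)` and `‖μ‖*_MK ≤ ‖μ‖ ⋅ diam T`. -/
theorem mkNorm_mkNormStar_comparison
    {T : Type*} [MetricSpace T] [CompactSpace T] [MeasurableSpace T] [BorelSpace T]
    {𝕜 X : Type*} [RCLike 𝕜] [NormedAddCommGroup X] [InnerProductSpace 𝕜 X] [CompleteSpace X]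
    (μ : VectorMeasure T X) (hμ : BddVar μ) (h0 : μ Set.univ = 0) :
    mkNorm 𝕜 μ ≤ mkNormStar 𝕜 μ ∧
      mkNormStar 𝕜 μ ≤ mkNorm 𝕜 μ * (Metric.diam (Set.univ : Set T) + 1) ∧
      mkNormStar 𝕜 μ ≤ varNorm μ * Metric.diam (Set.univ : Set T) := by
  rcases isEmpty_or_nonempty T with hT | hT
  · -- The empty case: everything is zero.
    haveI := hT
    have hsimp : ∀ g : T → X, IsSimpleFn g := fun g =>
      ⟨by rw [Set.range_eq_empty]; exact Set.finite_empty,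
       fun x => by rw [Set.eq_empty_of_isEmpty (g ⁻¹' {x})]; exact MeasurableSet.empty⟩
    have hall : ∀ A : Set T, μ A = 0 := fun A => by
      rw [Set.eq_empty_of_isEmpty A]; exact μ.empty
    have hsi : ∀ g : T → X, simpleIntegral 𝕜 μ g = 0 := fun g => by
      rw [simpleIntegral]; simp [hall]
    have huni : ∀ (f : T → X) (gs : ℕ → T → X), TendstoUniformly gs f atTop := by
      intro f gs u hu
      filter_upwards with n x
      exact isEmptyElim x
    have hint : ∀ f : T → X, uIntegral 𝕜 μ f = 0 := by
      intro f
      have hex : HasUIntegral 𝕜 μ f 0 := by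
        intro gs hgs hgu
        simp only [hsi]
        exact tendsto_const_nhds
      have hex' : ∃ I, HasUIntegral 𝕜 μ f I := ⟨0, hex⟩
      rw [uIntegral, dif_pos hex']
      have h2 := hex'.choose_spec (fun _ => f) (fun _ => hsimp f) (huni f _)
      have h3 := hex (fun _ => f) (fun _ => hsimp f) (huni f _)
      exact tendsto_nhds_unique h2 h3
    have h1 : mkNorm 𝕜 μ = 0 := by
      rw [mkNorm]
      have hset : {s | ∃ (f : T → X) (L : NNReal), LipschitzWith L f ∧
          (∀ t, ‖f t‖ + (L : ℝ) ≤ 1) ∧ s = ‖uIntegral 𝕜 μ f‖} = {0} := by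
        ext s
        simp only [Set.mem_setOf_eq, Set.mem_singleton_iff]
        constructor
        · rintro ⟨f, L, _, _, rfl⟩
          rw [hint f, norm_zero]
        · rintro rfl
          exact ⟨fun _ => 0, 0, LipschitzWith.const 0, fun t => isEmptyElim t,
            by rw [hint, norm_zero]⟩
      rw [hset, csSup_singleton]
    have h2 : mkNormStar 𝕜 μ = 0 := by
      rw [mkNormStar]
      have hset : {s | ∃ f : T → X, LipschitzWith 1 f ∧ s = ‖uIntegral 𝕜 μ f‖} = {0} := by
        ext s
        simp only [Set.mem_setOf_eq, Set.mem_singleton_iff]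
        constructor
        · rintro ⟨f, _, rfl⟩
          rw [hint f, norm_zero]
        · rintro rfl
          exact ⟨fun _ => 0, (LipschitzWith.const 0).weaken zero_le_one,
            by rw [hint, norm_zero]⟩
      rw [hset, csSup_singleton]
    refine ⟨by rw [h1, h2], by rw [h1, h2]; simp, ?_⟩
    rw [h2]
    exact mul_nonneg ENNReal.toReal_nonneg Metric.diam_nonneg
  · -- The nonempty case.
    haveI := hT
    set D := Metric.diam (Set.univ : Set T) with hDdef
    have hD : 0 ≤ D := Metric.diam_nonneg
    have hvar : 0 ≤ varNorm μ := ENNReal.toReal_nonneg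
    set t₀ : T := Classical.arbitrary T with ht₀
    set S1 := {s | ∃ (f : T → X) (L : NNReal), LipschitzWith L f ∧
      (∀ t, ‖f t‖ + (L : ℝ) ≤ 1) ∧ s = ‖uIntegral 𝕜 μ f‖} with hS1
    set S2 := {s | ∃ f : T → X, LipschitzWith 1 f ∧ s = ‖uIntegral 𝕜 μ f‖} with hS2
    have hmk1 : mkNorm 𝕜 μ = sSup S1 := rfl
    have hmk2 : mkNormStar 𝕜 μ = sSup S2 := rfl
    have hb2 : ∀ s ∈ S2, s ≤ varNorm μ * D := by
      rintro s ⟨f, hf, rfl⟩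
      exact norm_uIntegral_le_star μ hμ h0 hf
    have hbdd2 : BddAbove S2 := ⟨varNorm μ * D, hb2⟩
    have hsub : S1 ⊆ S2 := by
      rintro s ⟨f, L, hL, hbnd, rfl⟩
      refine ⟨f, hL.weaken ?_, rfl⟩
      have h1 := hbnd t₀
      have hL1 : (L : ℝ) ≤ 1 := le_trans (le_add_of_nonneg_left (norm_nonneg _)) h1
      exact_mod_cast hL1
    have hbdd1 : BddAbove S1 := hbdd2.mono hsub
    have h0mem : ‖uIntegral 𝕜 μ (fun _ : T => (0 : X))‖ ∈ S1 :=
      ⟨fun _ => 0, 0, LipschitzWith.const 0, fun t => by simp, rfl⟩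
    have hne1 : S1.Nonempty := ⟨_, h0mem⟩
    have hne2 : S2.Nonempty := ⟨_, hsub h0mem⟩
    have hmk_nonneg : 0 ≤ sSup S1 := le_trans (norm_nonneg _) (le_csSup hbdd1 h0mem)
    refine ⟨?_, ?_, ?_⟩
    · rw [hmk1, hmk2]
      exact csSup_le_csSup hbdd2 hne1 hsub
    · rw [hmk1, hmk2]
      refine csSup_le hne2 ?_
      rintro s ⟨f, hf, rfl⟩
      by_cases hex : ∃ I, HasUIntegral 𝕜 μ f I
      · set c : ℝ := D + 1 with hc
        have hc0 : 0 < c := by rw [hc]; linarith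
        have hcne : c ≠ 0 := ne_of_gt hc0
        have hck : ((c : ℝ) : 𝕜) ≠ 0 := RCLike.ofReal_ne_zero.2 hcne
        set I := hex.choose with hIdef
        have hIspec : HasUIntegral 𝕜 μ f I := hex.choose_spec
        set a : 𝕜 := ((c⁻¹ : ℝ) : 𝕜) with ha
        set g : T → X := fun t => a • (f t - f t₀) with hgdef
        have hfg : ∀ t, f t = ((c : ℝ) : 𝕜) • g t + f t₀ := by
          intro t
          rw [hgdef]
          simp only [ha, smul_smul]
          rw [← RCLike.ofReal_mul, mul_inv_cancel₀ hcne]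
          simp
        have hsub_lip : LipschitzWith 1 (fun t => f t - f t₀) := by
          refine LipschitzWith.of_dist_le_mul (fun x y => ?_)
          rw [dist_sub_right]
          simpa using hf.dist_le_mul x y
        have hdistD : ∀ t : T, ‖f t - f t₀‖ ≤ D := by
          intro t
          rw [← dist_eq_norm]
          refine (hf.dist_le_mul t t₀).trans ?_
          simp only [NNReal.coe_one, one_mul]
          exact Metric.dist_le_diam_of_mem isCompact_univ.isBounded
            (Set.mem_univ t) (Set.mem_univ t₀)
        have hna : ‖a‖ = c⁻¹ := by
          rw [ha, RCLike.norm_ofReal, abs_of_pos (inv_pos.2 hc0)]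
        have hDc : c⁻¹ * D + c⁻¹ = 1 := by
          have h' : c⁻¹ * (D + 1) = c⁻¹ * c := by rw [← hc]
          calc c⁻¹ * D + c⁻¹ = c⁻¹ * (D + 1) := by ring
            _ = c⁻¹ * c := h'
            _ = 1 := inv_mul_cancel₀ hcne
        have hJ : HasUIntegral 𝕜 μ g (((c : ℝ) : 𝕜)⁻¹ * I) := by
          intro h hsimp hconv
          have hk : ∀ n, IsSimpleFn (fun t => ((c : ℝ) : 𝕜) • h n t + f t₀) := by
            intro n
            have h1 : IsSimpleFn (fun t => ((c : ℝ) : 𝕜) • h n t) :=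
              (hsimp n).comp' (((c : ℝ) : 𝕜) • ·)
            exact h1.comp' (· + f t₀)
          have hkconv : TendstoUniformly (fun n t => ((c : ℝ) : 𝕜) • h n t + f t₀)
              f atTop := by
            rw [Metric.tendstoUniformly_iff] at hconv ⊢
            intro ε hε
            filter_upwards [hconv (ε / c) (by positivity)] with n hn
            intro x
            have hx := hn x
            rw [dist_eq_norm] at hx ⊢
            have heq : f x - (((c : ℝ) : 𝕜) • h n x + f t₀)
                = ((c : ℝ) : 𝕜) • (g x - h n x) := by
              rw [hfg x, smul_sub]; abel
            rw [heq, norm_smul, RCLike.norm_ofReal, abs_of_pos hc0]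
            calc c * ‖g x - h n x‖ < c * (ε / c) :=
                mul_lt_mul_of_pos_left hx hc0
              _ = ε := by field_simp
          have hmain := hIspec _ hk hkconv
          have heq2 : ∀ n, simpleIntegral 𝕜 μ (fun t => ((c : ℝ) : 𝕜) • h n t + f t₀)
              = ((c : ℝ) : 𝕜) * simpleIntegral 𝕜 μ (h n) := by
            intro n
            have h1 : IsSimpleFn (fun t => ((c : ℝ) : 𝕜) • h n t) :=
              (hsimp n).comp' (((c : ℝ) : 𝕜) • ·)
            rw [simpleIntegral_add_const (𝕜 := 𝕜) μ h1 (f t₀), h0, inner_zero_right,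
              add_zero, simpleIntegral_real_smul μ (hsimp n) hcne]
          simp only [heq2] at hmain
          have hmul := hmain.const_mul (((c : ℝ) : 𝕜)⁻¹)
          simpa [inv_mul_cancel_left₀ hck] using hmul
        have hgcont : Continuous g := by
          apply Continuous.const_smul
          exact hf.continuous.sub continuous_const
        have hgint : uIntegral 𝕜 μ g = ((c : ℝ) : 𝕜)⁻¹ * I := by
          have hex2 : ∃ J, HasUIntegral 𝕜 μ g J := ⟨_, hJ⟩
          rw [uIntegral, dif_pos hex2]
          exact hasUIntegral_unique μ hgcont hex2.choose_spec hJ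
        have hmem : ‖uIntegral 𝕜 μ g‖ ∈ S1 := by
          refine ⟨g, ‖a‖₊ * 1, ?_, ?_, rfl⟩
          · exact (lipschitzWith_smul a).comp hsub_lip
          · intro t
            have h1 : ‖g t‖ ≤ c⁻¹ * D := by
              rw [hgdef]
              simp only [norm_smul, hna]
              exact mul_le_mul_of_nonneg_left (hdistD t) (le_of_lt (inv_pos.2 hc0))
            have h2 : ((‖a‖₊ * 1 : NNReal) : ℝ) = c⁻¹ := by
              push_cast
              simp [hna]
            rw [h2]
            linarith
        have hle : ‖uIntegral 𝕜 μ g‖ ≤ sSup S1 := le_csSup hbdd1 hmem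
        rw [hgint, norm_mul, norm_inv, RCLike.norm_ofReal, abs_of_pos hc0] at hle
        have huf : ‖uIntegral 𝕜 μ f‖ = ‖I‖ := by rw [uIntegral, dif_pos hex]
        rw [huf]
        calc ‖I‖ = c * (c⁻¹ * ‖I‖) := by field_simp
          _ ≤ c * sSup S1 := mul_le_mul_of_nonneg_left hle (le_of_lt hc0)
          _ = sSup S1 * c := mul_comm _ _
      · rw [uIntegral, dif_neg hex, norm_zero]
        exact mul_nonneg hmk_nonneg (by linarith)
    · rw [hmk2]
      exact csSup_le hne2 hb2
end

section
/- Let T be a compact metric space, X a Hilbert space, t₁,...,t_M distinct points of T, and R₁,...,R_M ∈ L(X) with ∑_{i=1}^M ‖R_i‖ < 1. Let μ⁰ ∈ cabv(X) and define H₂(μ) = ∑_{i=1}^M δ_{t_i} R_i(μ(T)) + μ⁰. Then Id_X − R is invertible in L(X), where R = ∑ R_i, H₂ is a contraction on cabv(X), and its unique fixed point is μ* = ∑_{i=1}^M δ_{t_i} (R_i ∘ (Id_X − R)^{-1})(μ⁰(T)) + μ⁰. -/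
open MeasureTheory Filter Topology Set

open scoped Classical

section Aux
variable {T : Type*} [MeasurableSpace T] {𝕜 X : Type*} [RCLike 𝕜]
  [NormedAddCommGroup X] [NormedSpace 𝕜 X]

lemma diracVM_apply (t : T) (x : X) {A : Set T} (hA : MeasurableSet A) :
    diracVM (𝕜 := 𝕜) t x A = if t ∈ A then x else 0 := by
  simp only [diracVM, VectorMeasure.mapRange_apply, AddMonoidHom.coe_mk, ZeroHom.coe_mk,
    Measure.toSignedMeasure_apply_measurable hA, Measure.dirac_apply' t hA]
  by_cases h : t ∈ A <;> simp [h, Measure.real, Measure.dirac_apply' t hA]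

lemma diracVM_apply_univ (t : T) (x : X) : diracVM (𝕜 := 𝕜) t x Set.univ = x := by
  simp [diracVM_apply (𝕜 := 𝕜) t x MeasurableSet.univ]

lemma diracVM_sub (t : T) (x y : X) :
    diracVM (𝕜 := 𝕜) t x - diracVM (𝕜 := 𝕜) t y = diracVM (𝕜 := 𝕜) t (x - y) := by
  refine VectorMeasure.ext fun A hA => ?_
  rw [VectorMeasure.sub_apply, diracVM_apply t x hA, diracVM_apply t y hA,
    diracVM_apply t (x - y) hA]
  split <;> simp

lemma vm_sum_apply {ι : Type*} (s : Finset ι) (ν : ι → VectorMeasure T X) (A : Set T) :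
    (∑ i ∈ s, ν i) A = ∑ i ∈ s, ν i A := by
  induction s using Finset.cons_induction with
  | empty => rfl
  | cons i s hi ih => rw [Finset.sum_cons, Finset.sum_cons, VectorMeasure.add_apply, ih]

lemma evar_neg (μ : VectorMeasure T X) : evar (-μ) = evar μ := by
  simp only [evar, VectorMeasure.neg_apply, nnnorm_neg]

lemma evar_add_le (μ ν : VectorMeasure T X) : evar (μ + ν) ≤ evar μ + evar ν := by
  refine iSup₂_le fun P hP => ?_
  calc ∑ A ∈ P, (‖(μ + ν) A‖₊ : ENNReal)
      ≤ ∑ A ∈ P, ((‖μ A‖₊ : ENNReal) + ‖ν A‖₊) := Finset.sum_le_sum fun A _ => by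
        rw [VectorMeasure.add_apply]; exact_mod_cast nnnorm_add_le _ _
    _ = (∑ A ∈ P, (‖μ A‖₊ : ENNReal)) + ∑ A ∈ P, (‖ν A‖₊ : ENNReal) := Finset.sum_add_distrib
    _ ≤ evar μ + evar ν := add_le_add (le_iSup₂_of_le P hP le_rfl) (le_iSup₂_of_le P hP le_rfl)

lemma evar_sum_le {ι : Type*} (s : Finset ι) (ν : ι → VectorMeasure T X) :
    evar (∑ i ∈ s, ν i) ≤ ∑ i ∈ s, evar (ν i) := by
  induction s using Finset.cons_induction with
  | empty =>
    simp only [Finset.sum_empty]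
    refine iSup₂_le fun P hP => by simp [VectorMeasure.zero_apply]
  | cons i s hi ih =>
    rw [Finset.sum_cons, Finset.sum_cons]
    exact le_trans (evar_add_le _ _) (add_le_add le_rfl ih)

lemma norm_apply_le_evar {μ : VectorMeasure T X} {A : Set T} (hA : MeasurableSet A) :
    (‖μ A‖₊ : ENNReal) ≤ evar μ := by
  rcases Set.eq_empty_or_nonempty A with rfl | ⟨a, ha⟩
  · simp [VectorMeasure.empty]
  · have hne : A ≠ Aᶜ := fun h => (h ▸ ha : a ∈ Aᶜ) ha
    have hpart : IsBorelPartition ({A, Aᶜ} : Finset (Set T)) := by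
      refine ⟨?_, ?_, ?_⟩
      · intro B hB
        rcases Finset.mem_insert.mp hB with rfl | hB
        · exact hA
        · rw [Finset.mem_singleton.mp hB]; exact hA.compl
      · intro B hB C hC hBC
        simp only [Finset.coe_insert, Finset.coe_singleton, Set.mem_insert_iff,
          Set.mem_singleton_iff] at hB hC
        rcases hB with rfl | rfl <;> rcases hC with rfl | rfl
        · exact absurd rfl hBC
        · exact disjoint_compl_right
        · exact disjoint_compl_left
        · exact absurd rfl hBC
      · simp
    calc (‖μ A‖₊ : ENNReal) ≤ ∑ B ∈ ({A, Aᶜ} : Finset (Set T)), (‖μ B‖₊ : ENNReal) := by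
          rw [Finset.sum_pair hne]; exact le_self_add
      _ ≤ evar μ := le_iSup₂_of_le _ hpart le_rfl

lemma evar_dirac_le (t : T) (x : X) : evar (diracVM (𝕜 := 𝕜) t x) ≤ (‖x‖₊ : ENNReal) := by
  refine iSup₂_le fun P hP => ?_
  obtain ⟨hmeas, hdisj, -⟩ := hP
  calc ∑ A ∈ P, (‖diracVM (𝕜 := 𝕜) t x A‖₊ : ENNReal)
      = ∑ A ∈ P, (if t ∈ A then (‖x‖₊ : ENNReal) else 0) := Finset.sum_congr rfl fun A hA => by
        rw [diracVM_apply t x (hmeas A hA)]; split <;> simp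
    _ = ∑ _A ∈ P.filter (fun A => t ∈ A), (‖x‖₊ : ENNReal) := (Finset.sum_filter _ _).symm
    _ = (P.filter (fun A => t ∈ A)).card • (‖x‖₊ : ENNReal) := Finset.sum_const _
    _ ≤ (‖x‖₊ : ENNReal) := by
        have hcard : (P.filter (fun A => t ∈ A)).card ≤ 1 := by
          refine Finset.card_le_one.mpr fun A hA B hB => ?_
          simp only [Finset.mem_filter] at hA hB
          by_contra hne
          exact Set.disjoint_left.mp (hdisj hA.1 hB.1 hne) hA.2 hB.2
        rw [nsmul_eq_mul]
        calc ((P.filter (fun A => t ∈ A)).card : ENNReal) * ‖x‖₊ ≤ 1 * ‖x‖₊ := by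
              gcongr; exact_mod_cast hcard
          _ = ‖x‖₊ := one_mul _

lemma bddVar_sub {μ ν : VectorMeasure T X} (hμ : BddVar μ) (hν : BddVar ν) :
    BddVar (μ - ν) := by
  have h := evar_add_le μ (-ν)
  rw [evar_neg] at h
  rw [sub_eq_add_neg]
  exact ne_top_of_le_ne_top (ENNReal.add_ne_top.mpr ⟨hμ, hν⟩) h

lemma varNorm_eq_zero {μ : VectorMeasure T X} (hμ : BddVar μ) (h : varNorm μ = 0) :
    μ = 0 := by
  have he : evar μ = 0 := by
    rcases ENNReal.toReal_eq_zero_iff _ |>.mp h with h0 | h0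
    · exact h0
    · exact absurd h0 hμ
  refine VectorMeasure.ext fun A hA => ?_
  have := norm_apply_le_evar (μ := μ) hA
  rw [he, le_zero_iff] at this
  simpa using this

end Aux

section Main
variable {T : Type*} [MeasurableSpace T] {𝕜 X : Type*} [RCLike 𝕜]
  [NormedAddCommGroup X] [NormedSpace 𝕜 X]

lemma contraction_main {M : ℕ} (t : Fin M → T) (R : Fin M → X →L[𝕜] X)
    (μ0 : VectorMeasure T X) (μ ν : VectorMeasure T X) (hμ : BddVar μ) (hν : BddVar ν) :
    varNorm ((∑ i, diracVM (𝕜 := 𝕜) (t i) ((R i) (μ Set.univ)) + μ0) -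
        (∑ i, diracVM (𝕜 := 𝕜) (t i) ((R i) (ν Set.univ)) + μ0)) ≤
      (∑ i, ‖R i‖) * varNorm (μ - ν) := by
  set z := (μ - ν) Set.univ with hz
  have hdiff : (∑ i, diracVM (𝕜 := 𝕜) (t i) ((R i) (μ Set.univ)) + μ0) -
      (∑ i, diracVM (𝕜 := 𝕜) (t i) ((R i) (ν Set.univ)) + μ0)
      = ∑ i, diracVM (𝕜 := 𝕜) (t i) ((R i) z) := by
    rw [add_sub_add_right_eq_sub, ← Finset.sum_sub_distrib]
    refine Finset.sum_congr rfl fun i _ => ?_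
    rw [diracVM_sub, ← map_sub, hz, VectorMeasure.sub_apply]
  rw [hdiff]
  have hfin : evar (μ - ν) ≠ ⊤ := bddVar_sub hμ hν
  have hzle : (‖z‖₊ : ENNReal) ≤ evar (μ - ν) := norm_apply_le_evar MeasurableSet.univ
  have hE : evar (∑ i, diracVM (𝕜 := 𝕜) (t i) ((R i) z)) ≤
      (∑ i, (‖R i‖₊ : ENNReal)) * evar (μ - ν) := by
    calc evar (∑ i, diracVM (𝕜 := 𝕜) (t i) ((R i) z))
        ≤ ∑ i, evar (diracVM (𝕜 := 𝕜) (t i) ((R i) z)) := evar_sum_le _ _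
      _ ≤ ∑ i, (‖R i‖₊ : ENNReal) * (‖z‖₊ : ENNReal) := Finset.sum_le_sum fun i _ =>
          le_trans (evar_dirac_le _ _) (by exact_mod_cast (R i).le_opNNNorm z)
      _ = (∑ i, (‖R i‖₊ : ENNReal)) * ‖z‖₊ := (Finset.sum_mul _ _ _).symm
      _ ≤ _ := mul_le_mul_right hzle _
  have hne : (∑ i, (‖R i‖₊ : ENNReal)) * evar (μ - ν) ≠ ⊤ := by
    refine ENNReal.mul_ne_top ?_ hfin
    rw [← ENNReal.coe_finset_sum]; exact ENNReal.coe_ne_top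
  have := ENNReal.toReal_mono hne hE
  refine le_trans this (le_of_eq ?_)
  rw [ENNReal.toReal_mul]
  congr 1
  rw [← ENNReal.coe_finset_sum, ENNReal.coe_toReal]
  push_cast
  rfl

end Main

/-- with constant maps `ω_i ≡ t_i` and `∑ ‖R_i‖ < 1`,
`H₂(μ) = ∑ δ_{t_i} R_i(μ(T)) + μ⁰` is a contraction on `cabv(X)`, `Id − R` is invertible
(`R = ∑ R_i`), and the unique fixed point is
`μ* = ∑ δ_{t_i}(R_i ∘ (Id − R)⁻¹)(μ⁰(T)) + μ⁰`. -/
theorem constant_maps_fixed_point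
    {T : Type*} [MetricSpace T] [CompactSpace T] [MeasurableSpace T] [BorelSpace T]
    {𝕜 X : Type*} [RCLike 𝕜] [NormedAddCommGroup X] [InnerProductSpace 𝕜 X] [CompleteSpace X]
    {M : ℕ} (t : Fin M → T) (ht : Function.Injective t)
    (R : Fin M → X →L[𝕜] X) (he : (∑ i, ‖R i‖) < 1)
    (μ0 : VectorMeasure T X) (hμ0 : BddVar μ0) :
    IsUnit ((1 : X →L[𝕜] X) - ∑ i, R i) ∧
    (∀ μ ν : VectorMeasure T X, BddVar μ → BddVar ν →
      varNorm ((∑ i, diracVM (𝕜 := 𝕜) (t i) ((R i) (μ Set.univ)) + μ0) -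
          (∑ i, diracVM (𝕜 := 𝕜) (t i) ((R i) (ν Set.univ)) + μ0)) ≤
        (∑ i, ‖R i‖) * varNorm (μ - ν)) ∧
    (∃! μs : VectorMeasure T X, BddVar μs ∧
      ∑ i, diracVM (𝕜 := 𝕜) (t i) ((R i) (μs Set.univ)) + μ0 = μs) ∧
    (∀ μs : VectorMeasure T X,
      μs = ∑ i, diracVM (𝕜 := 𝕜) (t i)
          ((R i) ((Ring.inverse ((1 : X →L[𝕜] X) - ∑ j, R j)) (μ0 Set.univ))) + μ0 →
      ∑ i, diracVM (𝕜 := 𝕜) (t i) ((R i) (μs Set.univ)) + μ0 = μs) := by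
  have hnorm : ‖∑ i, R i‖ < 1 := lt_of_le_of_lt (norm_sum_le _ _) he
  have hunit : IsUnit ((1 : X →L[𝕜] X) - ∑ i, R i) :=
    ⟨Units.oneSub (∑ i, R i) hnorm, Units.val_oneSub _ _⟩
  set S := Ring.inverse ((1 : X →L[𝕜] X) - ∑ j, R j) with hS
  set y := μ0 Set.univ with hy
  -- key algebra : (∑ R i) (S y) + y = S y
  have hkey : (∑ i, R i) (S y) + y = S y := by
    have h1 : (((1 : X →L[𝕜] X) - ∑ j, R j) * S) y = y := by
      rw [Ring.mul_inverse_cancel _ hunit]; rfl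
    rw [ContinuousLinearMap.mul_apply, ContinuousLinearMap.sub_apply,
      ContinuousLinearMap.one_apply] at h1
    linear_combination (norm := abel) h1.symm
  set μs : VectorMeasure T X :=
    ∑ i, diracVM (𝕜 := 𝕜) (t i) ((R i) (S y)) + μ0 with hμs
  have hμsU : μs Set.univ = S y := by
    rw [hμs, VectorMeasure.add_apply, vm_sum_apply]
    have : ∑ i, (diracVM (𝕜 := 𝕜) (t i) ((R i) (S y))) Set.univ = ∑ i, (R i) (S y) :=
      Finset.sum_congr rfl fun i _ => diracVM_apply_univ _ _
    rw [this, ← ContinuousLinearMap.sum_apply, ← hy]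
    exact hkey
  have hfix : ∑ i, diracVM (𝕜 := 𝕜) (t i) ((R i) (μs Set.univ)) + μ0 = μs := by
    rw [hμsU]
  have hbdd : BddVar μs := by
    have h1 : evar (∑ i, diracVM (𝕜 := 𝕜) (t i) ((R i) (S y))) ≤
        ((∑ i, ‖(R i) (S y)‖₊ : NNReal) : ENNReal) := by
      rw [ENNReal.coe_finset_sum]
      exact le_trans (evar_sum_le _ _) (Finset.sum_le_sum fun i _ => evar_dirac_le _ _)
    have h2 : evar (∑ i, diracVM (𝕜 := 𝕜) (t i) ((R i) (S y))) ≠ ⊤ :=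
      ne_top_of_le_ne_top ENNReal.coe_ne_top h1
    exact ne_top_of_le_ne_top (ENNReal.add_ne_top.mpr ⟨h2, hμ0⟩) (evar_add_le _ _)
  refine ⟨hunit, fun μ ν hμ hν => contraction_main t R μ0 μ ν hμ hν, ?_, ?_⟩
  · refine ⟨μs, ⟨hbdd, hfix⟩, ?_⟩
    rintro μa ⟨hba, hfa⟩
    have hd := contraction_main t R μ0 μa μs hba hbdd
    rw [hfa, hfix] at hd
    have h0 : varNorm (μa - μs) = 0 := by
      have hnn : (0:ℝ) ≤ varNorm (μa - μs) := ENNReal.toReal_nonneg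
      nlinarith
    have := varNorm_eq_zero (bddVar_sub hba hbdd) h0
    exact sub_eq_zero.mp this
  · intro ν hν
    rw [hν]
    exact hfix
end

section
/- Let T be a compact metric space, X a Hilbert space, (ω_i)_{i≥1} Lipschitz self-maps with bounded Lipschitz constants r_i, and (R_i)_{i≥1} ⊂ L(X) with ∑_{i=1}^∞ ‖R_i‖ < ∞. Then for every μ ∈ cabv(X), the series ∑_{i=1}^∞ R_i ∘ ω_i(μ) is absolutely convergent in (cabv(X), variational norm), and the resulting operator H(μ) = ∑_{i=1}^∞ R_i ∘ ω_i(μ) is linear and continuous with ‖H‖ ≤ ∑_{i=1}^∞ ‖R_i‖. -/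
open MeasureTheory Filter Topology Set

section Aux

variable {T : Type*} [MeasurableSpace T] {X : Type*} [NormedAddCommGroup X]

lemma aux_sum_nnnorm_le_evar (μ : VectorMeasure T X) {ι : Type*} {s : Finset ι}
    {A : ι → Set T} (hm : ∀ j ∈ s, MeasurableSet (A j))
    (hd : (s : Set ι).PairwiseDisjoint A) :
    ∑ j ∈ s, (‖μ (A j)‖₊ : ENNReal) ≤ evar μ := by
  classical
  set s' := s.filter (fun j => A j ≠ ∅) with hs'
  have hsub : ∀ j ∈ s', j ∈ s := fun j hj => Finset.filter_subset _ _ hj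
  have hsum : ∑ j ∈ s, (‖μ (A j)‖₊ : ENNReal) = ∑ j ∈ s', (‖μ (A j)‖₊ : ENNReal) := by
    refine (Finset.sum_filter_of_ne ?_).symm
    intro j hj h hA
    apply h
    rw [hA, μ.empty]
    simp
  have hinj : Set.InjOn A s' := by
    intro j hj k hk hjk
    by_contra hne
    have hd' : Disjoint (A j) (A k) := hd (hsub j hj) (hsub k hk) hne
    rw [hjk, disjoint_self, Set.bot_eq_empty] at hd'
    exact (Finset.mem_filter.1 hk).2 hd'
  set Q : Finset (Set T) := s'.image A with hQ
  have hsum2 : ∑ j ∈ s', (‖μ (A j)‖₊ : ENNReal) = ∑ B ∈ Q, (‖μ B‖₊ : ENNReal) := by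
    rw [hQ]
    exact (Finset.sum_image (f := fun B => (‖μ B‖₊ : ENNReal))
      (fun x hx y hy h => hinj hx hy h)).symm
  set U : Set T := ⋃₀ (Q : Set (Set T)) with hU
  have hQm : ∀ B ∈ Q, MeasurableSet B := by
    intro B hB
    obtain ⟨j, hj, rfl⟩ := Finset.mem_image.1 hB
    exact hm j (hsub j hj)
  have hUm : MeasurableSet U :=
    MeasurableSet.sUnion (Q.countable_toSet) (fun B hB => hQm B (Finset.mem_coe.1 hB))
  set P : Finset (Set T) := insert Uᶜ Q with hP
  have hQd : (Q : Set (Set T)).PairwiseDisjoint id := by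
    intro B hB B' hB' hne
    obtain ⟨j, hj, rfl⟩ := Finset.mem_image.1 (Finset.mem_coe.1 hB)
    obtain ⟨k, hk, rfl⟩ := Finset.mem_image.1 (Finset.mem_coe.1 hB')
    exact hd (hsub j hj) (hsub k hk) (fun h => hne (by rw [h]))
  have hpart : IsBorelPartition P := by
    refine ⟨?_, ?_, ?_⟩
    · intro B hB
      rcases Finset.mem_insert.1 hB with rfl | hB
      · exact hUm.compl
      · exact hQm B hB
    · rw [hP, Finset.coe_insert]
      refine hQd.insert ?_
      intro B hB _
      exact (disjoint_compl_left (a := U)).mono_right (subset_sUnion_of_mem hB)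
    · rw [hP, Finset.coe_insert, Set.sUnion_insert, ← hU, compl_union_self]
  calc ∑ j ∈ s, (‖μ (A j)‖₊ : ENNReal) = ∑ B ∈ Q, (‖μ B‖₊ : ENNReal) := by
        rw [hsum, hsum2]
    _ ≤ ∑ B ∈ P, (‖μ B‖₊ : ENNReal) :=
        Finset.sum_le_sum_of_subset (Finset.subset_insert _ _)
    _ ≤ evar μ := le_iSup₂ (f := fun (P : Finset (Set T)) (_ : IsBorelPartition P) =>
        ∑ B ∈ P, (‖μ B‖₊ : ENNReal)) P hpart

lemma aux_nnnorm_le_evar (μ : VectorMeasure T X) {B : Set T} (hB : MeasurableSet B) :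
    (‖μ B‖₊ : ENNReal) ≤ evar μ := by
  have := aux_sum_nnnorm_le_evar μ (ι := Unit) (s := {()}) (A := fun _ => B)
    (fun _ _ => hB) (by simp [Set.pairwiseDisjoint_singleton])
  simpa using this

lemma aux_varNorm_nonneg (μ : VectorMeasure T X) : 0 ≤ varNorm μ := ENNReal.toReal_nonneg

lemma aux_sum_norm_le_varNorm (μ : VectorMeasure T X) (hμ : BddVar μ) {ι : Type*}
    {s : Finset ι} {A : ι → Set T} (hm : ∀ j ∈ s, MeasurableSet (A j))
    (hd : (s : Set ι).PairwiseDisjoint A) :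
    ∑ j ∈ s, ‖μ (A j)‖ ≤ varNorm μ := by
  have h2 := ENNReal.toReal_mono hμ (aux_sum_nnnorm_le_evar μ hm hd)
  rw [ENNReal.toReal_sum (fun a _ => ENNReal.coe_ne_top)] at h2
  simpa [varNorm] using h2

lemma aux_norm_le_varNorm (μ : VectorMeasure T X) (hμ : BddVar μ) {B : Set T}
    (hB : MeasurableSet B) : ‖μ B‖ ≤ varNorm μ := by
  have := ENNReal.toReal_mono hμ (aux_nnnorm_le_evar μ hB)
  simpa [varNorm] using this

lemma aux_evar_le_ofReal (μ : VectorMeasure T X) {C : ℝ}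
    (h : ∀ P : Finset (Set T), IsBorelPartition P → ∑ A ∈ P, ‖μ A‖ ≤ C) :
    evar μ ≤ ENNReal.ofReal C := by
  rw [evar]
  refine iSup₂_le fun P hP => ?_
  have : ∑ A ∈ P, (‖μ A‖₊ : ENNReal) = ENNReal.ofReal (∑ A ∈ P, ‖μ A‖) := by
    rw [ENNReal.ofReal_sum_of_nonneg (fun _ _ => norm_nonneg _)]
    exact Finset.sum_congr rfl fun A _ => (ofReal_norm _).symm
  rw [this]
  exact ENNReal.ofReal_le_ofReal (h P hP)

lemma aux_bddVar_of_le (μ : VectorMeasure T X) {C : ℝ} (hC : 0 ≤ C)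
    (h : ∀ P : Finset (Set T), IsBorelPartition P → ∑ A ∈ P, ‖μ A‖ ≤ C) :
    BddVar μ ∧ varNorm μ ≤ C := by
  have h1 := aux_evar_le_ofReal μ h
  have h2 : BddVar μ := ne_top_of_le_ne_top ENNReal.ofReal_ne_top h1
  refine ⟨h2, ?_⟩
  have := ENNReal.toReal_mono ENNReal.ofReal_ne_top h1
  rwa [ENNReal.toReal_ofReal hC] at this

lemma aux_bddVar_add {μ ν : VectorMeasure T X} (hμ : BddVar μ) (hν : BddVar ν) :
    BddVar (μ + ν) := by
  have hle : evar (μ + ν) ≤ evar μ + evar ν := by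
    rw [evar]
    refine iSup₂_le fun P hP => ?_
    calc ∑ A ∈ P, (‖(μ + ν) A‖₊ : ENNReal)
        ≤ ∑ A ∈ P, ((‖μ A‖₊ : ENNReal) + (‖ν A‖₊ : ENNReal)) := by
          refine Finset.sum_le_sum fun A _ => ?_
          rw [VectorMeasure.add_apply]
          exact_mod_cast nnnorm_add_le _ _
      _ = ∑ A ∈ P, (‖μ A‖₊ : ENNReal) + ∑ A ∈ P, (‖ν A‖₊ : ENNReal) :=
          Finset.sum_add_distrib
      _ ≤ evar μ + evar ν :=
          add_le_add
            (le_iSup₂ (f := fun (P : Finset (Set T)) (_ : IsBorelPartition P) =>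
              ∑ B ∈ P, (‖μ B‖₊ : ENNReal)) P hP)
            (le_iSup₂ (f := fun (P : Finset (Set T)) (_ : IsBorelPartition P) =>
              ∑ B ∈ P, (‖ν B‖₊ : ENNReal)) P hP)
  exact ne_top_of_le_ne_top (ENNReal.add_ne_top.2 ⟨hμ, hν⟩) hle

lemma aux_bddVar_smul {𝕜 : Type*} [NontriviallyNormedField 𝕜] [NormedSpace 𝕜 X]
    (c : 𝕜) {μ : VectorMeasure T X} (hμ : BddVar μ) : BddVar (c • μ) := by
  have hle : evar (c • μ) ≤ (‖c‖₊ : ENNReal) * evar μ := by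
    rw [evar]
    refine iSup₂_le fun P hP => ?_
    calc ∑ A ∈ P, (‖(c • μ) A‖₊ : ENNReal)
        = ∑ A ∈ P, (‖c‖₊ : ENNReal) * (‖μ A‖₊ : ENNReal) := by
          refine Finset.sum_congr rfl fun A _ => ?_
          rw [VectorMeasure.smul_apply, nnnorm_smul]
          push_cast
          ring
      _ = (‖c‖₊ : ENNReal) * ∑ A ∈ P, (‖μ A‖₊ : ENNReal) := (Finset.mul_sum _ _ _).symm
      _ ≤ (‖c‖₊ : ENNReal) * evar μ := by
          refine mul_le_mul_right ?_ _
          exact le_iSup₂ (f := fun (P : Finset (Set T)) (_ : IsBorelPartition P) =>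
            ∑ B ∈ P, (‖μ B‖₊ : ENNReal)) P hP
  exact ne_top_of_le_ne_top (ENNReal.mul_ne_top ENNReal.coe_ne_top hμ) hle

lemma aux_opsum_le {𝕜 : Type*} [NontriviallyNormedField 𝕜] [NormedSpace 𝕜 X]
    (μ : VectorMeasure T X) (hμ : BddVar μ) {ω : T → T} (hωm : Measurable ω)
    (R : X →L[𝕜] X) {ι : Type*} (s : Finset ι) (A : ι → Set T)
    (hm : ∀ j ∈ s, MeasurableSet (A j)) (hd : (s : Set ι).PairwiseDisjoint A) :
    ∑ j ∈ s, ‖R (μ (ω ⁻¹' (A j)))‖ ≤ ‖R‖ * varNorm μ := by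
  calc ∑ j ∈ s, ‖R (μ (ω ⁻¹' (A j)))‖
      ≤ ∑ j ∈ s, ‖R‖ * ‖μ (ω ⁻¹' (A j))‖ := Finset.sum_le_sum fun j _ => R.le_opNorm _
    _ = ‖R‖ * ∑ j ∈ s, ‖μ (ω ⁻¹' (A j))‖ := (Finset.mul_sum _ _ _).symm
    _ ≤ ‖R‖ * varNorm μ := by
        refine mul_le_mul_of_nonneg_left ?_ (norm_nonneg _)
        refine aux_sum_norm_le_varNorm μ hμ (fun j hj => hωm (hm j hj)) ?_
        intro a ha b hb hab
        exact (hd ha hb hab).preimage ω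

end Aux

open Classical in
/-- The sum measure `B ↦ ∑' i, R i (μ (ω i ⁻¹' B))`, given a proof of countable additivity. -/
noncomputable def markovHm {T : Type*} [MeasurableSpace T] {𝕜 X : Type*}
    [NontriviallyNormedField 𝕜] [NormedAddCommGroup X] [NormedSpace 𝕜 X]
    (ω : ℕ → T → T) (R : ℕ → X →L[𝕜] X) (μ : VectorMeasure T X)
    (hcnt : ∀ ⦃f : ℕ → Set T⦄, (∀ n, MeasurableSet (f n)) → Pairwise (Function.onFun Disjoint f) →
      HasSum (fun n => ∑' i, R i (μ (ω i ⁻¹' (f n))))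
        (∑' i, R i (μ (ω i ⁻¹' (⋃ n, f n))))) : VectorMeasure T X where
  measureOf' B := if MeasurableSet B then ∑' i, R i (μ (ω i ⁻¹' B)) else 0
  empty' := by simp
  not_measurable' B hB := if_neg hB
  m_iUnion' f hfm hfd := by
    have h := hcnt hfm hfd
    simpa only [hfm, MeasurableSet.iUnion hfm, if_true] using h

open Classical in
lemma markovHm_apply {T : Type*} [MeasurableSpace T] {𝕜 X : Type*}
    [NontriviallyNormedField 𝕜] [NormedAddCommGroup X] [NormedSpace 𝕜 X]
    (ω : ℕ → T → T) (R : ℕ → X →L[𝕜] X) (μ : VectorMeasure T X) {hcnt} {B : Set T}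
    (hB : MeasurableSet B) :
    markovHm ω R μ hcnt B = ∑' i, R i (μ (ω i ⁻¹' B)) := if_pos hB


/-- countable case: if `(r_i)` is bounded and `∑ ‖R_i‖ < ∞`, the series
`∑ R_i ∘ ω_i(μ)` converges absolutely in the variational norm and defines a linear,
continuous operator `H` with `‖H(μ)‖ ≤ (∑ ‖R_i‖) ‖μ‖`. -/
theorem countable_markovH_exists
    {T : Type*} [MetricSpace T] [CompactSpace T] [MeasurableSpace T] [BorelSpace T]
    {𝕜 X : Type*} [RCLike 𝕜] [NormedAddCommGroup X] [InnerProductSpace 𝕜 X] [CompleteSpace X]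
    (ω : ℕ → T → T) (r : ℕ → NNReal) (hω : ∀ i, LipschitzWith (r i) (ω i))
    (hrbdd : ∃ C : NNReal, ∀ i, r i ≤ C)
    (R : ℕ → X →L[𝕜] X) (hR : Summable fun i => ‖R i‖) :
    ∃ Hop : VectorMeasure T X → VectorMeasure T X,
      (∀ μ : VectorMeasure T X, BddVar μ →
        (Summable fun i => varNorm (opComp (R i) (μ.map (ω i)))) ∧
        (∀ B : Set T, MeasurableSet B →
          HasSum (fun i => (R i) (μ (ω i ⁻¹' B))) (Hop μ B)) ∧
        BddVar (Hop μ) ∧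
        varNorm (Hop μ) ≤ (∑' i, ‖R i‖) * varNorm μ) ∧
      (∀ μ ν : VectorMeasure T X, BddVar μ → BddVar ν →
        Hop (μ + ν) = Hop μ + Hop ν) ∧
      (∀ (c : 𝕜) (μ : VectorMeasure T X), BddVar μ → Hop (c • μ) = c • Hop μ) := by
  classical
  have hωm : ∀ i, Measurable (ω i) := fun i => (hω i).continuous.measurable
  -- pointwise bound
  have hbound : ∀ (μ : VectorMeasure T X), BddVar μ → ∀ (B : Set T), MeasurableSet B →
      ∀ i, ‖R i (μ (ω i ⁻¹' B))‖ ≤ ‖R i‖ * varNorm μ := by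
    intro μ hμ B hB i
    calc ‖R i (μ (ω i ⁻¹' B))‖ ≤ ‖R i‖ * ‖μ (ω i ⁻¹' B)‖ := (R i).le_opNorm _
      _ ≤ ‖R i‖ * varNorm μ :=
        mul_le_mul_of_nonneg_left (aux_norm_le_varNorm μ hμ ((hωm i) hB)) (norm_nonneg _)
  have hsummable : ∀ (μ : VectorMeasure T X), BddVar μ → ∀ (B : Set T), MeasurableSet B →
      Summable (fun i => R i (μ (ω i ⁻¹' B))) := by
    intro μ hμ B hB
    exact Summable.of_norm (Summable.of_nonneg_of_le (fun i => norm_nonneg _)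
      (fun i => hbound μ hμ B hB i) (hR.mul_right _))
  -- countable additivity
  have hcnt : ∀ (μ : VectorMeasure T X), BddVar μ → ∀ ⦃f : ℕ → Set T⦄,
      (∀ n, MeasurableSet (f n)) → Pairwise (Function.onFun Disjoint f) →
      HasSum (fun n => ∑' i, R i (μ (ω i ⁻¹' (f n))))
        (∑' i, R i (μ (ω i ⁻¹' (⋃ n, f n)))) := by
    intro μ hμ f hfm hfd
    set F : ℕ × ℕ → X := fun p => R p.1 (μ (ω p.1 ⁻¹' (f p.2))) with hF
    have hrange : ∀ i n, ∑ k ∈ Finset.range n, ‖F (i, k)‖ ≤ ‖R i‖ * varNorm μ := by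
      intro i n
      exact aux_opsum_le μ hμ (hωm i) (R i) (Finset.range n) f (fun k _ => hfm k)
        (fun a _ b _ hab => hfd hab)
    have hFnorm : Summable (fun p : ℕ × ℕ => ‖F p‖) := by
      rw [summable_prod_of_nonneg (fun p => norm_nonneg _)]
      constructor
      · intro i
        exact summable_of_sum_range_le (fun n => norm_nonneg _) (hrange i)
      · refine Summable.of_nonneg_of_le (fun i => tsum_nonneg (fun n => norm_nonneg _))
          (fun i => ?_) (hR.mul_right (varNorm μ))
        exact Real.tsum_le_of_sum_range_le (fun n => norm_nonneg _) (hrange i)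
    have hFsum : Summable F := hFnorm.of_norm
    have hF'sum : Summable (fun p : ℕ × ℕ => F p.swap) := hFsum.prod_symm
    have hfibsum : ∀ n, HasSum (fun i => F (i, n)) (∑' i, F (i, n)) := fun n =>
      (hF'sum.prod_factor n).hasSum
    have hmain : HasSum (fun n => ∑' i, F (i, n)) (∑' p : ℕ × ℕ, F p.swap) :=
      HasSum.prod_fiberwise hF'sum.hasSum hfibsum
    have hinner : ∀ i, ∑' n, F (i, n) = R i (μ (ω i ⁻¹' (⋃ n, f n))) := by
      intro i
      have h1 : HasSum (fun n => μ (ω i ⁻¹' (f n))) (μ (⋃ n, ω i ⁻¹' (f n))) :=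
        μ.m_iUnion (fun n => (hωm i) (hfm n)) (fun a b hab => (hfd hab).preimage (ω i))
      have h2 := h1.mapL (R i)
      rw [← Set.preimage_iUnion] at h2
      exact h2.tsum_eq
    have hval : (∑' p : ℕ × ℕ, F p.swap) = ∑' i, R i (μ (ω i ⁻¹' (⋃ n, f n))) := by
      have hswap : (∑' p : ℕ × ℕ, F p.swap) = ∑' p : ℕ × ℕ, F p :=
        (Equiv.prodComm ℕ ℕ).tsum_eq F
      rw [hswap, Summable.tsum_prod hFsum]
      exact tsum_congr hinner
    rw [hval] at hmain
    exact hmain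
  -- the operator
  set Hop : VectorMeasure T X → VectorMeasure T X := fun μ =>
    if h : BddVar μ then markovHm ω R μ (hcnt μ h) else 0 with hHop
  have Hop_apply : ∀ (μ : VectorMeasure T X) (hμ : BddVar μ) (B : Set T), MeasurableSet B →
      Hop μ B = ∑' i, R i (μ (ω i ⁻¹' B)) := by
    intro μ hμ B hB
    rw [hHop]
    simp only [dif_pos hμ]
    exact markovHm_apply ω R μ hB
  refine ⟨Hop, ?_, ?_, ?_⟩
  · -- main properties
    intro μ hμ
    have hopc : ∀ i (B : Set T), MeasurableSet B →
        opComp (R i) (μ.map (ω i)) B = R i (μ (ω i ⁻¹' B)) := by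
      intro i B hB
      rw [opComp]; erw [VectorMeasure.mapRange_apply]; rw [VectorMeasure.map_apply _ (hωm i) hB]
      rfl
    have hvar_i : ∀ i, BddVar (opComp (R i) (μ.map (ω i))) ∧
        varNorm (opComp (R i) (μ.map (ω i))) ≤ ‖R i‖ * varNorm μ := by
      intro i
      refine aux_bddVar_of_le _ (mul_nonneg (norm_nonneg _) (aux_varNorm_nonneg μ)) ?_
      intro P hP
      calc ∑ A ∈ P, ‖opComp (R i) (μ.map (ω i)) A‖
          = ∑ A ∈ P, ‖R i (μ (ω i ⁻¹' A))‖ :=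
            Finset.sum_congr rfl fun A hA => by rw [hopc i A (hP.1 A hA)]
        _ ≤ ‖R i‖ * varNorm μ := aux_opsum_le μ hμ (hωm i) (R i) P id hP.1 hP.2.1
    refine ⟨?_, ?_, ?_⟩
    · exact Summable.of_nonneg_of_le (fun i => aux_varNorm_nonneg _)
        (fun i => (hvar_i i).2) (hR.mul_right _)
    · intro B hB
      rw [Hop_apply μ hμ B hB]
      exact (hsummable μ hμ B hB).hasSum
    · -- BddVar and norm bound for Hop μ
      have hS : 0 ≤ (∑' i, ‖R i‖) := tsum_nonneg (fun i => norm_nonneg _)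
      refine aux_bddVar_of_le _ (mul_nonneg hS (aux_varNorm_nonneg μ)) ?_
      intro P hP
      have hPsummable : ∀ A ∈ P, Summable (fun i => ‖R i (μ (ω i ⁻¹' A))‖) := by
        intro A hA
        exact Summable.of_nonneg_of_le (fun i => norm_nonneg _)
          (fun i => hbound μ hμ A (hP.1 A hA) i) (hR.mul_right _)
      calc ∑ A ∈ P, ‖Hop μ A‖
          = ∑ A ∈ P, ‖∑' i, R i (μ (ω i ⁻¹' A))‖ :=
            Finset.sum_congr rfl fun A hA => by rw [Hop_apply μ hμ A (hP.1 A hA)]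
        _ ≤ ∑ A ∈ P, ∑' i, ‖R i (μ (ω i ⁻¹' A))‖ :=
            Finset.sum_le_sum fun A hA => norm_tsum_le_tsum_norm (hPsummable A hA)
        _ = ∑' i, ∑ A ∈ P, ‖R i (μ (ω i ⁻¹' A))‖ := (Summable.tsum_finsetSum hPsummable).symm
        _ ≤ ∑' i, ‖R i‖ * varNorm μ := by
            refine Summable.tsum_le_tsum (fun i => aux_opsum_le μ hμ (hωm i) (R i) P id hP.1 hP.2.1) ?_
              (hR.mul_right _)
            refine Summable.of_nonneg_of_le
              (fun i => Finset.sum_nonneg fun A _ => norm_nonneg _)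
              (fun i => aux_opsum_le μ hμ (hωm i) (R i) P id hP.1 hP.2.1) (hR.mul_right _)
        _ = (∑' i, ‖R i‖) * varNorm μ := tsum_mul_right
  · -- additive
    intro μ ν hμ hν
    have hsum : BddVar (μ + ν) := aux_bddVar_add hμ hν
    refine VectorMeasure.ext fun B hB => ?_
    rw [VectorMeasure.add_apply, Hop_apply _ hsum B hB, Hop_apply _ hμ B hB,
      Hop_apply _ hν B hB]
    have : (fun i => R i ((μ + ν) (ω i ⁻¹' B)))
        = fun i => R i (μ (ω i ⁻¹' B)) + R i (ν (ω i ⁻¹' B)) := by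
      funext i
      rw [VectorMeasure.add_apply, map_add]
    rw [this]
    exact Summable.tsum_add (hsummable μ hμ B hB) (hsummable ν hν B hB)
  · -- smul
    intro c μ hμ
    have hsmul : BddVar (c • μ) := aux_bddVar_smul c hμ
    refine VectorMeasure.ext fun B hB => ?_
    rw [VectorMeasure.smul_apply, Hop_apply _ hsmul B hB, Hop_apply _ hμ B hB]
    have : (fun i => R i ((c • μ) (ω i ⁻¹' B)))
        = fun i => c • R i (μ (ω i ⁻¹' B)) := by
      funext i
      rw [VectorMeasure.smul_apply, ContinuousLinearMap.map_smul]
    rw [this]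
    exact (((hsummable μ hμ B hB).hasSum.const_smul c).tsum_eq)
end
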